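/- Let a > b > c > 0 be real constants, P(x) = x(x−a)(x−b)(x−c), and let U ⊆ ℝ³ be a nonempty open set on which λ¹ > λ² > λ³ > 0 and on which for each i the quantity ∏_{j≠i}(λⁱ−λʲ)/P(λⁱ) is positive. On U define W = 1 + √(λ¹λ²λ³/(abc)), Hᵢ² = W⁻²·∏_{j≠i}(λⁱ−λʲ)/P(λⁱ), and h = √(H₁²H₂²H₃²). Let α₁, α₂ be real constants, and for each i let φᵢ be a C² function on an open interval containing the range of λⁱ on U (on which P ≠ 0), satisfying φᵢ''(x) + (P'(x)/(2P(x)))φᵢ'(x) + (1/P(x))[α₁ + α₂x + (3/16)x²]φᵢ(x) = 0. Then the function ψ(λ) = √W·φ₁(λ¹)φ₂(λ²)φ₃(λ³) satisfies the Laplace equation ∑_{i=1}^{3} ∂ᵢ((h/Hᵢ²) ∂ᵢψ) = 0 on U. -/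

import Mathlib

/-- The partial derivative of `f : ℝ³ → ℝ` in the `i`-th coordinate direction,
taken as a line (directional) derivative. -/
noncomputable def pd (i : Fin 3) (f : (Fin 3 → ℝ) → ℝ) (x : Fin 3 → ℝ) : ℝ :=
  lineDeriv ℝ f x (Pi.single i 1)


lemma pd_eq (i : Fin 3) (f : (Fin 3 → ℝ) → ℝ) (l : Fin 3 → ℝ) :
    pd i f l = deriv (fun s => f (Function.update l i s)) (l i) := by
  rw [pd, lineDeriv]
  have key : (fun t : ℝ => f (l + t • (Pi.single i 1 : Fin 3 → ℝ)))
      = (fun t : ℝ => f (Function.update l i (l i + t))) := by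
    funext t
    congr 1
    funext j
    by_cases hj : j = i
    · subst hj; simp
    · simp [Function.update_of_ne hj, Pi.single_eq_of_ne hj]
  rw [key]
  have := deriv_comp_const_add (fun s => f (Function.update l i s)) (l i) 0
  simpa using this

lemma perase0 (g : Fin 3 → ℝ) : (∏ j ∈ Finset.univ.erase (0 : Fin 3), g j) = g 1 * g 2 := by
  have : Finset.univ.erase (0 : Fin 3) = {1, 2} := by decide
  rw [this, Finset.prod_pair (by decide)]

lemma perase1 (g : Fin 3 → ℝ) : (∏ j ∈ Finset.univ.erase (1 : Fin 3), g j) = g 0 * g 2 := by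
  have : Finset.univ.erase (1 : Fin 3) = {0, 2} := by decide
  rw [this, Finset.prod_pair (by decide)]

lemma perase2 (g : Fin 3 → ℝ) : (∏ j ∈ Finset.univ.erase (2 : Fin 3), g j) = g 0 * g 1 := by
  have : Finset.univ.erase (2 : Fin 3) = {0, 1} := by decide
  rw [this, Finset.prod_pair (by decide)]

set_option maxHeartbeats 1000000 in
lemma bocherPoly (x y z a b c α1 α2 r W P0 P1 P2 dP0 dP1 dP2 : ℝ)
    (hW : W = 1+r) (hr : r^2*(a*b*c) = x*y*z)
    (hP0 : P0 = x*(x-a)*(x-b)*(x-c)) (hP1 : P1 = y*(y-a)*(y-b)*(y-c))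
    (hP2 : P2 = z*(z-a)*(z-b)*(z-c))
    (hdP0 : dP0 = (x-a)*(x-b)*(x-c)+x*(x-b)*(x-c)+x*(x-a)*(x-c)+x*(x-a)*(x-b))
    (hdP1 : dP1 = (y-a)*(y-b)*(y-c)+y*(y-b)*(y-c)+y*(y-a)*(y-c)+y*(y-a)*(y-b))
    (hdP2 : dP2 = (z-a)*(z-b)*(z-c)+z*(z-b)*(z-c)+z*(z-a)*(z-c)+z*(z-a)*(z-b)) :
    (y-z)*(-(16*α1+16*α2*x+3*x^2)*x^2*W^2 + 2*x*W*r*dP0 - 2*r*P0*(W+r) - r^2*P0)*y^2*z^2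
    + (z-x)*(-(16*α1+16*α2*y+3*y^2)*y^2*W^2 + 2*y*W*r*dP1 - 2*r*P1*(W+r) - r^2*P1)*x^2*z^2
    + (x-y)*(-(16*α1+16*α2*z+3*z^2)*z^2*W^2 + 2*z*W*r*dP2 - 2*r*P2*(W+r) - r^2*P2)*x^2*y^2 = 0 := by
  subst hW hP0 hP1 hP2 hdP0 hdP1 hdP2
  linear_combination (3*x*y*z*(x-y)*(y-z)*(x-z)) * hr

set_option maxHeartbeats 1000000 in
lemma final_identity
    (x y z α1 α2 r W sW f0 f1 f2 dP0 dP1 dP2 p0 p1 p2 dp0 dp1 dp2 ddp0 ddp1 ddp2 : ℝ)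
    (hx : x ≠ 0) (hy : y ≠ 0) (hz : z ≠ 0) (hW : W ≠ 0) (hsW : sW ≠ 0)
    (hf0 : f0 ≠ 0) (hf1 : f1 ≠ 0) (hf2 : f2 ≠ 0)
    (hode0 : ddp0 + dP0/(2*(f0^2))*dp0 + (1/(f0^2))*(α1+α2*x+3/16*x^2)*p0 = 0)
    (hode1 : ddp1 + dP1/(2*(-(f1^2)))*dp1 + (1/(-(f1^2)))*(α1+α2*y+3/16*y^2)*p1 = 0)
    (hode2 : ddp2 + dP2/(2*(f2^2))*dp2 + (1/(f2^2))*(α1+α2*z+3/16*z^2)*p2 = 0)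
    (heq : (y-z)*(-(16*α1+16*α2*x+3*x^2)*x^2*W^2 + 2*x*W*r*dP0 - 2*r*(f0^2)*(W+r) - r^2*(f0^2))*y^2*z^2
         + (z-x)*(-(16*α1+16*α2*y+3*y^2)*y^2*W^2 + 2*y*W*r*dP1 - 2*r*(-(f1^2))*(W+r) - r^2*(-(f1^2)))*x^2*z^2
         + (x-y)*(-(16*α1+16*α2*z+3*z^2)*z^2*W^2 + 2*z*W*r*dP2 - 2*r*(f2^2)*(W+r) - r^2*(f2^2))*x^2*y^2 = 0) :
    (y-z)*p1*p2/(f1*f2) *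
      ((1/sW) * ((dP0/(2*f0) - f0*r/(4*x*W))*(dp0 + r*p0/(4*x*W))
        + f0*(ddp0 - r*(W+r)*p0/(8*x^2*W^2) + r*dp0/(4*x*W))))
    + (x-z)*p0*p2/(f0*f2) *
      ((1/sW) * ((-dP1/(2*f1) - f1*r/(4*y*W))*(dp1 + r*p1/(4*y*W))
        + f1*(ddp1 - r*(W+r)*p1/(8*y^2*W^2) + r*dp1/(4*y*W))))
    + (x-y)*p0*p1/(f0*f1) *
      ((1/sW) * ((dP2/(2*f2) - f2*r/(4*z*W))*(dp2 + r*p2/(4*z*W))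
        + f2*(ddp2 - r*(W+r)*p2/(8*z^2*W^2) + r*dp2/(4*z*W)))) = 0 := by
  have hf02 : (f0:ℝ)^2 ≠ 0 := pow_ne_zero _ hf0
  have hf12 : (f1:ℝ)^2 ≠ 0 := pow_ne_zero _ hf1
  have hf22 : (f2:ℝ)^2 ≠ 0 := pow_ne_zero _ hf2
  have h0 : ddp0 = -(dP0/(2*(f0^2))*dp0) - (1/(f0^2))*(α1+α2*x+3/16*x^2)*p0 := by linarith
  have h1 : ddp1 = -(dP1/(2*(-(f1^2)))*dp1) - (1/(-(f1^2)))*(α1+α2*y+3/16*y^2)*p1 := by linarith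
  have h2 : ddp2 = -(dP2/(2*(f2^2))*dp2) - (1/(f2^2))*(α1+α2*z+3/16*z^2)*p2 := by linarith
  rw [h0, h1, h2]
  have E : (y-z)*p1*p2/(f1*f2) *
      ((1/sW) * ((dP0/(2*f0) - f0*r/(4*x*W))*(dp0 + r*p0/(4*x*W))
        + f0*((-(dP0/(2*(f0^2))*dp0) - (1/(f0^2))*(α1+α2*x+3/16*x^2)*p0) - r*(W+r)*p0/(8*x^2*W^2) + r*dp0/(4*x*W))))
    + (x-z)*p0*p2/(f0*f2) *
      ((1/sW) * ((-dP1/(2*f1) - f1*r/(4*y*W))*(dp1 + r*p1/(4*y*W))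
        + f1*((-(dP1/(2*(-(f1^2)))*dp1) - (1/(-(f1^2)))*(α1+α2*y+3/16*y^2)*p1) - r*(W+r)*p1/(8*y^2*W^2) + r*dp1/(4*y*W))))
    + (x-y)*p0*p1/(f0*f1) *
      ((1/sW) * ((dP2/(2*f2) - f2*r/(4*z*W))*(dp2 + r*p2/(4*z*W))
        + f2*((-(dP2/(2*(f2^2))*dp2) - (1/(f2^2))*(α1+α2*z+3/16*z^2)*p2) - r*(W+r)*p2/(8*z^2*W^2) + r*dp2/(4*z*W))))
    = (p0*p1*p2) / (16*sW*f0*f1*f2*x^2*y^2*z^2*W^2) *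
      ((y-z)*(-(16*α1+16*α2*x+3*x^2)*x^2*W^2 + 2*x*W*r*dP0 - 2*r*(f0^2)*(W+r) - r^2*(f0^2))*y^2*z^2
         + (z-x)*(-(16*α1+16*α2*y+3*y^2)*y^2*W^2 + 2*y*W*r*dP1 - 2*r*(-(f1^2))*(W+r) - r^2*(-(f1^2)))*x^2*z^2
         + (x-y)*(-(16*α1+16*α2*z+3*z^2)*z^2*W^2 + 2*z*W*r*dP2 - 2*r*(f2^2)*(W+r) - r^2*(f2^2))*x^2*y^2) := by
    field_simp
    ring
  rw [E, heq, mul_zero]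
set_option maxHeartbeats 4000000 in
/-- **R-separability of the flat cyclidic metric in the Laplace equation.** With
`a > b > c > 0`, `P(x) = x(x-a)(x-b)(x-c)`, `W = 1 + √(λ¹λ²λ³/(abc))`,
`Hᵢ² = W⁻²∏_{j≠i}(λⁱ-λʲ)/P(λⁱ)` and `h = √(H₁²H₂²H₃²)` on a nonempty open set `U` where
`λ¹ > λ² > λ³ > 0` and the `Hᵢ²` are positive: every choice of `C²` solutions of
`φᵢ'' + (P'/(2P))φᵢ' + (1/P)[α₁ + α₂x + (3/16)x²]φᵢ = 0` on open intervals `Jᵢ`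
containing the range of `λⁱ` (on which `P ≠ 0`) yields a solution `ψ = √W·φ₁φ₂φ₃` of
the Laplace equation `∑ᵢ ∂ᵢ((h/Hᵢ²)∂ᵢψ) = 0` on `U`. -/
theorem cyclidic_R_separability (a b c : ℝ) (hab : b < a) (hbc : c < b) (hc : 0 < c)
    (P : ℝ → ℝ) (hP : ∀ x, P x = x * (x - a) * (x - b) * (x - c))
    (U : Set (Fin 3 → ℝ)) (hUo : IsOpen U) (hUne : U.Nonempty)
    (hord : ∀ l ∈ U, 0 < l 2 ∧ l 2 < l 1 ∧ l 1 < l 0)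
    (W : (Fin 3 → ℝ) → ℝ)
    (hW : ∀ l, W l = 1 + Real.sqrt (l 0 * l 1 * l 2 / (a * b * c)))
    (H2 : Fin 3 → (Fin 3 → ℝ) → ℝ)
    (hH2 : ∀ i l,
      H2 i l = (W l ^ 2)⁻¹ * (∏ j ∈ Finset.univ.erase i, (l i - l j)) / P (l i))
    (hpos : ∀ i : Fin 3, ∀ l ∈ U,
      0 < (∏ j ∈ Finset.univ.erase i, (l i - l j)) / P (l i))
    (h : (Fin 3 → ℝ) → ℝ) (hh : ∀ l, h l = Real.sqrt (H2 0 l * H2 1 l * H2 2 l))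
    (α1 α2 : ℝ)
    (J : Fin 3 → Set ℝ) (hJo : ∀ i, IsOpen (J i)) (hJc : ∀ i, (J i).OrdConnected)
    (hJmem : ∀ i : Fin 3, ∀ l ∈ U, l i ∈ J i) (hJP : ∀ i, ∀ x ∈ J i, P x ≠ 0)
    (φ : Fin 3 → ℝ → ℝ) (hφ : ∀ i, ContDiffOn ℝ 2 (φ i) (J i))
    (hode : ∀ i, ∀ x ∈ J i,
      deriv (deriv (φ i)) x + deriv P x / (2 * P x) * deriv (φ i) x
        + (1 / P x) * (α1 + α2 * x + 3 / 16 * x ^ 2) * φ i x = 0)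
    (ψ : (Fin 3 → ℝ) → ℝ)
    (hψ : ∀ l, ψ l = Real.sqrt (W l) * (φ 0 (l 0) * φ 1 (l 1) * φ 2 (l 2))) :
    ∀ l ∈ U, ∑ i : Fin 3, pd i (fun w => h w / H2 i w * pd i ψ w) l = 0 := by
  have hb : 0 < b := hc.trans hbc
  have ha : 0 < a := hb.trans hab
  have habc : (0:ℝ) < a * b * c := by positivity
  -- sign facts on U
  have hsign : ∀ w ∈ U, 0 < P (w 0) ∧ P (w 1) < 0 ∧ 0 < P (w 2) := by
    intro w hw
    obtain ⟨h2, h21, h10⟩ := hord w hw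
    have hA := hpos 0 w hw; rw [perase0] at hA
    have hB := hpos 1 w hw; rw [perase1] at hB
    have hC := hpos 2 w hw; rw [perase2] at hC
    refine ⟨?_, ?_, ?_⟩
    · rcases div_pos_iff.mp hA with ⟨_, hp⟩ | ⟨hn, _⟩
      · exact hp
      · nlinarith
    · rcases div_pos_iff.mp hB with ⟨hn, _⟩ | ⟨_, hp⟩
      · nlinarith
      · exact hp
    · rcases div_pos_iff.mp hC with ⟨_, hp⟩ | ⟨hn, _⟩
      · exact hp
      · nlinarith
  have hWpos : ∀ w : Fin 3 → ℝ, 0 < W w := by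
    intro w; rw [hW]; positivity
  have hH2pos : ∀ i : Fin 3, ∀ w ∈ U, 0 < H2 i w := by
    intro i w hw
    rw [hH2, mul_div_assoc]
    exact mul_pos (inv_pos.mpr (pow_pos (hWpos w) 2)) (hpos i w hw)
  have hhpos : ∀ w ∈ U, 0 < h w := by
    intro w hw
    rw [hh]
    exact Real.sqrt_pos.mpr (mul_pos (mul_pos (hH2pos 0 w hw) (hH2pos 1 w hw)) (hH2pos 2 w hw))
  -- ===== the metric coefficient formulas =====
  have hC0 : ∀ w ∈ U, h w / H2 0 w =
      (w 1 - w 2) * Real.sqrt (P (w 0)) / (Real.sqrt (-P (w 1)) * Real.sqrt (P (w 2))) / W w := by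
    intro w hw
    obtain ⟨h2, h21, h10⟩ := hord w hw
    obtain ⟨hPx, hPy, hPz⟩ := hsign w hw
    have hL : 0 < h w / H2 0 w := div_pos (hhpos w hw) (hH2pos 0 w hw)
    have hR : 0 < (w 1 - w 2) * Real.sqrt (P (w 0)) / (Real.sqrt (-P (w 1)) * Real.sqrt (P (w 2))) / W w := by
      apply div_pos (div_pos (mul_pos (by linarith) (Real.sqrt_pos.mpr hPx))
        (mul_pos (Real.sqrt_pos.mpr (by linarith)) (Real.sqrt_pos.mpr hPz))) (hWpos w)
    have hsq : (h w / H2 0 w)^2 =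
        ((w 1 - w 2) * Real.sqrt (P (w 0)) / (Real.sqrt (-P (w 1)) * Real.sqrt (P (w 2))) / W w)^2 := by
      simp only [div_pow, mul_pow]
      rw [hh, Real.sq_sqrt (mul_pos (mul_pos (hH2pos 0 w hw) (hH2pos 1 w hw)) (hH2pos 2 w hw)).le,
        Real.sq_sqrt hPx.le, Real.sq_sqrt (by linarith : (0:ℝ) ≤ -P (w 1)), Real.sq_sqrt hPz.le,
        hH2 0 w, hH2 1 w, hH2 2 w, perase0 (fun j => w 0 - w j), perase1 (fun j => w 1 - w j),
        perase2 (fun j => w 2 - w j)]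
      have hW0 : W w ≠ 0 := ne_of_gt (hWpos w)
      have hP0' : P (w 0) ≠ 0 := ne_of_gt hPx
      have hP1' : P (w 1) ≠ 0 := ne_of_lt hPy
      have hP2' : P (w 2) ≠ 0 := ne_of_gt hPz
      have e01 : w 0 - w 1 ≠ 0 := by intro hq; nlinarith
      have e02 : w 0 - w 2 ≠ 0 := by intro hq; nlinarith
      have e12 : w 1 - w 2 ≠ 0 := by intro hq; nlinarith
      have e10 : w 1 - w 0 ≠ 0 := by intro hq; nlinarith
      have e20 : w 2 - w 0 ≠ 0 := by intro hq; nlinarith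
      have e21 : w 2 - w 1 ≠ 0 := by intro hq; nlinarith
      field_simp
      ring
    calc h w / H2 0 w = Real.sqrt ((h w / H2 0 w)^2) := (Real.sqrt_sq hL.le).symm
      _ = Real.sqrt (((w 1 - w 2) * Real.sqrt (P (w 0)) / (Real.sqrt (-P (w 1)) * Real.sqrt (P (w 2))) / W w)^2) := by rw [hsq]
      _ = _ := Real.sqrt_sq hR.le
  have hC1 : ∀ w ∈ U, h w / H2 1 w =
      (w 0 - w 2) * Real.sqrt (-P (w 1)) / (Real.sqrt (P (w 0)) * Real.sqrt (P (w 2))) / W w := by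
    intro w hw
    obtain ⟨h2, h21, h10⟩ := hord w hw
    obtain ⟨hPx, hPy, hPz⟩ := hsign w hw
    have hL : 0 < h w / H2 1 w := div_pos (hhpos w hw) (hH2pos 1 w hw)
    have hR : 0 < (w 0 - w 2) * Real.sqrt (-P (w 1)) / (Real.sqrt (P (w 0)) * Real.sqrt (P (w 2))) / W w := by
      apply div_pos (div_pos (mul_pos (by linarith) (Real.sqrt_pos.mpr (by linarith)))
        (mul_pos (Real.sqrt_pos.mpr hPx) (Real.sqrt_pos.mpr hPz))) (hWpos w)
    have hsq : (h w / H2 1 w)^2 =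
        ((w 0 - w 2) * Real.sqrt (-P (w 1)) / (Real.sqrt (P (w 0)) * Real.sqrt (P (w 2))) / W w)^2 := by
      simp only [div_pow, mul_pow]
      rw [hh, Real.sq_sqrt (mul_pos (mul_pos (hH2pos 0 w hw) (hH2pos 1 w hw)) (hH2pos 2 w hw)).le,
        Real.sq_sqrt hPx.le, Real.sq_sqrt (by linarith : (0:ℝ) ≤ -P (w 1)), Real.sq_sqrt hPz.le,
        hH2 0 w, hH2 1 w, hH2 2 w, perase0 (fun j => w 0 - w j), perase1 (fun j => w 1 - w j),
        perase2 (fun j => w 2 - w j)]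
      have hW0 : W w ≠ 0 := ne_of_gt (hWpos w)
      have hP0' : P (w 0) ≠ 0 := ne_of_gt hPx
      have hP1' : P (w 1) ≠ 0 := ne_of_lt hPy
      have hP2' : P (w 2) ≠ 0 := ne_of_gt hPz
      have e01 : w 0 - w 1 ≠ 0 := by intro hq; nlinarith
      have e02 : w 0 - w 2 ≠ 0 := by intro hq; nlinarith
      have e12 : w 1 - w 2 ≠ 0 := by intro hq; nlinarith
      have e10 : w 1 - w 0 ≠ 0 := by intro hq; nlinarith
      have e20 : w 2 - w 0 ≠ 0 := by intro hq; nlinarith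
      have e21 : w 2 - w 1 ≠ 0 := by intro hq; nlinarith
      field_simp
      ring
    calc h w / H2 1 w = Real.sqrt ((h w / H2 1 w)^2) := (Real.sqrt_sq hL.le).symm
      _ = Real.sqrt (((w 0 - w 2) * Real.sqrt (-P (w 1)) / (Real.sqrt (P (w 0)) * Real.sqrt (P (w 2))) / W w)^2) := by rw [hsq]
      _ = _ := Real.sqrt_sq hR.le
  have hC2 : ∀ w ∈ U, h w / H2 2 w =
      (w 0 - w 1) * Real.sqrt (P (w 2)) / (Real.sqrt (P (w 0)) * Real.sqrt (-P (w 1))) / W w := by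
    intro w hw
    obtain ⟨h2, h21, h10⟩ := hord w hw
    obtain ⟨hPx, hPy, hPz⟩ := hsign w hw
    have hL : 0 < h w / H2 2 w := div_pos (hhpos w hw) (hH2pos 2 w hw)
    have hR : 0 < (w 0 - w 1) * Real.sqrt (P (w 2)) / (Real.sqrt (P (w 0)) * Real.sqrt (-P (w 1))) / W w := by
      apply div_pos (div_pos (mul_pos (by linarith) (Real.sqrt_pos.mpr hPz))
        (mul_pos (Real.sqrt_pos.mpr hPx) (Real.sqrt_pos.mpr (by linarith)))) (hWpos w)
    have hsq : (h w / H2 2 w)^2 =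
        ((w 0 - w 1) * Real.sqrt (P (w 2)) / (Real.sqrt (P (w 0)) * Real.sqrt (-P (w 1))) / W w)^2 := by
      simp only [div_pow, mul_pow]
      rw [hh, Real.sq_sqrt (mul_pos (mul_pos (hH2pos 0 w hw) (hH2pos 1 w hw)) (hH2pos 2 w hw)).le,
        Real.sq_sqrt hPx.le, Real.sq_sqrt (by linarith : (0:ℝ) ≤ -P (w 1)), Real.sq_sqrt hPz.le,
        hH2 0 w, hH2 1 w, hH2 2 w, perase0 (fun j => w 0 - w j), perase1 (fun j => w 1 - w j),
        perase2 (fun j => w 2 - w j)]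
      have hW0 : W w ≠ 0 := ne_of_gt (hWpos w)
      have hP0' : P (w 0) ≠ 0 := ne_of_gt hPx
      have hP1' : P (w 1) ≠ 0 := ne_of_lt hPy
      have hP2' : P (w 2) ≠ 0 := ne_of_gt hPz
      have e01 : w 0 - w 1 ≠ 0 := by intro hq; nlinarith
      have e02 : w 0 - w 2 ≠ 0 := by intro hq; nlinarith
      have e12 : w 1 - w 2 ≠ 0 := by intro hq; nlinarith
      have e10 : w 1 - w 0 ≠ 0 := by intro hq; nlinarith
      have e20 : w 2 - w 0 ≠ 0 := by intro hq; nlinarith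
      have e21 : w 2 - w 1 ≠ 0 := by intro hq; nlinarith
      field_simp
      ring
    calc h w / H2 2 w = Real.sqrt ((h w / H2 2 w)^2) := (Real.sqrt_sq hL.le).symm
      _ = Real.sqrt (((w 0 - w 1) * Real.sqrt (P (w 2)) / (Real.sqrt (P (w 0)) * Real.sqrt (-P (w 1))) / W w)^2) := by rw [hsq]
      _ = _ := Real.sqrt_sq hR.le
  -- differentiability facts for the φ i
  have hphi : ∀ i : Fin 3, ∀ t ∈ J i, HasDerivAt (φ i) (deriv (φ i) t) t := by
    intro i t ht
    exact (((hφ i).differentiableOn (by norm_num)).differentiableAt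
      ((hJo i).mem_nhds ht)).hasDerivAt
  have hdphi : ∀ i : Fin 3, ∀ t ∈ J i, HasDerivAt (deriv (φ i)) (deriv (deriv (φ i)) t) t := by
    intro i t ht
    have h1 : ContDiffOn ℝ 1 (deriv (φ i)) (J i) := (hφ i).deriv_of_isOpen (hJo i) (by norm_num)
    exact ((h1.differentiableOn (by norm_num)).differentiableAt ((hJo i).mem_nhds ht)).hasDerivAt
  -- ===== the pd-of-ψ formulas =====
  have hB0 : ∀ w ∈ U, pd 0 ψ w =
      1 * (w 1 * w 2 / (a*b*c)) / (2 * Real.sqrt (w 0 * (w 1 * w 2 / (a*b*c)))) /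
        (2 * Real.sqrt (1 + Real.sqrt (w 0 * (w 1 * w 2 / (a*b*c))))) * (φ 0 (w 0) * (φ 1 (w 1) * φ 2 (w 2)))
      + Real.sqrt (1 + Real.sqrt (w 0 * (w 1 * w 2 / (a*b*c)))) * (deriv (φ 0) (w 0) * (φ 1 (w 1) * φ 2 (w 2))) := by
    intro w hw
    obtain ⟨hw2, hw21, hw10⟩ := hord w hw
    have hw1 : 0 < w 1 := hw2.trans hw21
    have hw0 : 0 < w 0 := hw1.trans hw10
    rw [pd_eq]
    have hfun : (fun s => ψ (Function.update w 0 s)) =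
        fun s => Real.sqrt (1 + Real.sqrt (s * (w 1 * w 2 / (a*b*c)))) * (φ 0 s * (φ 1 (w 1) * φ 2 (w 2))) := by
      funext s
      rw [hψ, hW]
      simp only [Function.update_self, Function.update_of_ne (show (1:Fin 3) ≠ 0 by decide),
        Function.update_of_ne (show (2:Fin 3) ≠ 0 by decide)]
      rw [show s * w 1 * w 2 / (a*b*c) = s * (w 1 * w 2 / (a*b*c)) from by ring]
      ring
    rw [hfun]
    have h1 : HasDerivAt (fun s : ℝ => s * (w 1 * w 2 / (a*b*c))) (1 * (w 1 * w 2 / (a*b*c))) (w 0) :=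
      (hasDerivAt_id (w 0)).mul_const _
    have h2 := h1.sqrt (show w 0 * (w 1 * w 2 / (a*b*c)) ≠ 0 from ne_of_gt (by positivity))
    have h3 := h2.const_add 1
    have h4 := h3.sqrt (show (1:ℝ) + Real.sqrt (w 0 * (w 1 * w 2 / (a*b*c))) ≠ 0 from
      ne_of_gt (by positivity))
    exact (h4.mul ((hphi 0 (w 0) (hJmem 0 w hw)).mul_const (φ 1 (w 1) * φ 2 (w 2)))).deriv
  have hB1 : ∀ w ∈ U, pd 1 ψ w =
      1 * (w 0 * w 2 / (a*b*c)) / (2 * Real.sqrt (w 1 * (w 0 * w 2 / (a*b*c)))) /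
        (2 * Real.sqrt (1 + Real.sqrt (w 1 * (w 0 * w 2 / (a*b*c))))) * (φ 1 (w 1) * (φ 0 (w 0) * φ 2 (w 2)))
      + Real.sqrt (1 + Real.sqrt (w 1 * (w 0 * w 2 / (a*b*c)))) * (deriv (φ 1) (w 1) * (φ 0 (w 0) * φ 2 (w 2))) := by
    intro w hw
    obtain ⟨hw2, hw21, hw10⟩ := hord w hw
    have hw1 : 0 < w 1 := hw2.trans hw21
    have hw0 : 0 < w 0 := hw1.trans hw10
    rw [pd_eq]
    have hfun : (fun s => ψ (Function.update w 1 s)) =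
        fun s => Real.sqrt (1 + Real.sqrt (s * (w 0 * w 2 / (a*b*c)))) * (φ 1 s * (φ 0 (w 0) * φ 2 (w 2))) := by
      funext s
      rw [hψ, hW]
      simp only [Function.update_self, Function.update_of_ne (show (0:Fin 3) ≠ 1 by decide),
        Function.update_of_ne (show (2:Fin 3) ≠ 1 by decide)]
      rw [show w 0 * s * w 2 / (a*b*c) = s * (w 0 * w 2 / (a*b*c)) from by ring]
      ring
    rw [hfun]
    have h1 : HasDerivAt (fun s : ℝ => s * (w 0 * w 2 / (a*b*c))) (1 * (w 0 * w 2 / (a*b*c))) (w 1) :=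
      (hasDerivAt_id (w 1)).mul_const _
    have h2 := h1.sqrt (show w 1 * (w 0 * w 2 / (a*b*c)) ≠ 0 from ne_of_gt (by positivity))
    have h3 := h2.const_add 1
    have h4 := h3.sqrt (show (1:ℝ) + Real.sqrt (w 1 * (w 0 * w 2 / (a*b*c))) ≠ 0 from
      ne_of_gt (by positivity))
    exact (h4.mul ((hphi 1 (w 1) (hJmem 1 w hw)).mul_const (φ 0 (w 0) * φ 2 (w 2)))).deriv
  have hB2 : ∀ w ∈ U, pd 2 ψ w =
      1 * (w 0 * w 1 / (a*b*c)) / (2 * Real.sqrt (w 2 * (w 0 * w 1 / (a*b*c)))) /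
        (2 * Real.sqrt (1 + Real.sqrt (w 2 * (w 0 * w 1 / (a*b*c))))) * (φ 2 (w 2) * (φ 0 (w 0) * φ 1 (w 1)))
      + Real.sqrt (1 + Real.sqrt (w 2 * (w 0 * w 1 / (a*b*c)))) * (deriv (φ 2) (w 2) * (φ 0 (w 0) * φ 1 (w 1))) := by
    intro w hw
    obtain ⟨hw2, hw21, hw10⟩ := hord w hw
    have hw1 : 0 < w 1 := hw2.trans hw21
    have hw0 : 0 < w 0 := hw1.trans hw10
    rw [pd_eq]
    have hfun : (fun s => ψ (Function.update w 2 s)) =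
        fun s => Real.sqrt (1 + Real.sqrt (s * (w 0 * w 1 / (a*b*c)))) * (φ 2 s * (φ 0 (w 0) * φ 1 (w 1))) := by
      funext s
      rw [hψ, hW]
      simp only [Function.update_self, Function.update_of_ne (show (0:Fin 3) ≠ 2 by decide),
        Function.update_of_ne (show (1:Fin 3) ≠ 2 by decide)]
      rw [show w 0 * w 1 * s / (a*b*c) = s * (w 0 * w 1 / (a*b*c)) from by ring]
      ring
    rw [hfun]
    have h1 : HasDerivAt (fun s : ℝ => s * (w 0 * w 1 / (a*b*c))) (1 * (w 0 * w 1 / (a*b*c))) (w 2) :=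
      (hasDerivAt_id (w 2)).mul_const _
    have h2 := h1.sqrt (show w 2 * (w 0 * w 1 / (a*b*c)) ≠ 0 from ne_of_gt (by positivity))
    have h3 := h2.const_add 1
    have h4 := h3.sqrt (show (1:ℝ) + Real.sqrt (w 2 * (w 0 * w 1 / (a*b*c))) ≠ 0 from
      ne_of_gt (by positivity))
    exact (h4.mul ((hphi 2 (w 2) (hJmem 2 w hw)).mul_const (φ 0 (w 0) * φ 1 (w 1)))).deriv
  intro l hl
  obtain ⟨hl2, hl21, hl10⟩ := hord l hl
  have hl1 : 0 < l 1 := hl2.trans hl21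
  have hl0 : 0 < l 0 := hl1.trans hl10
  obtain ⟨hPx, hPy, hPz⟩ := hsign l hl
  have hprod : 0 < l 0 * l 1 * l 2 / (a*b*c) := by positivity
  have hrpos : 0 < Real.sqrt (l 0 * l 1 * l 2 / (a*b*c)) := Real.sqrt_pos.mpr hprod
  have hWl : (0:ℝ) < 1 + Real.sqrt (l 0 * l 1 * l 2 / (a*b*c)) := by positivity
  have hsWpos : 0 < Real.sqrt (1 + Real.sqrt (l 0 * l 1 * l 2 / (a*b*c))) := Real.sqrt_pos.mpr hWl
  have hf0pos : 0 < Real.sqrt (P (l 0)) := Real.sqrt_pos.mpr hPx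
  have hf1pos : 0 < Real.sqrt (-P (l 1)) := Real.sqrt_pos.mpr (by linarith)
  have hf2pos : 0 < Real.sqrt (P (l 2)) := Real.sqrt_pos.mpr hPz
  -- ==== i = 0 ====
  have hUs0 : ∀ᶠ s in nhds (l 0), Function.update l 0 s ∈ U := by
    have hcont : Continuous (fun s : ℝ => Function.update l 0 s) :=
      continuous_const.update 0 continuous_id
    have heq0 : Function.update l 0 (l 0) = l := Function.update_eq_self 0 l
    exact hcont.continuousAt.preimage_mem_nhds (heq0.symm ▸ (hUo.mem_nhds hl))
  have ev0 : (fun s => h (Function.update l 0 s) / H2 0 (Function.update l 0 s)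
        * pd 0 ψ (Function.update l 0 s)) =ᶠ[nhds (l 0)]
      (fun s => (l 1 - l 2) * Real.sqrt (P s) / (Real.sqrt (-P (l 1)) * Real.sqrt (P (l 2)))
          / (1 + Real.sqrt (s * (l 1 * l 2 / (a*b*c)))) *
        (1 * (l 1 * l 2 / (a*b*c)) / (2 * Real.sqrt (s * (l 1 * l 2 / (a*b*c)))) /
            (2 * Real.sqrt (1 + Real.sqrt (s * (l 1 * l 2 / (a*b*c))))) * (φ 0 s * (φ 1 (l 1) * φ 2 (l 2)))
          + Real.sqrt (1 + Real.sqrt (s * (l 1 * l 2 / (a*b*c)))) * (deriv (φ 0) s * (φ 1 (l 1) * φ 2 (l 2))))) := by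
    filter_upwards [hUs0] with s hs
    rw [hC0 _ hs, hB0 _ hs, hW]
    simp only [Function.update_self, Function.update_of_ne (show (1:Fin 3) ≠ 0 by decide),
      Function.update_of_ne (show (2:Fin 3) ≠ 0 by decide)]
    rw [show s * l 1 * l 2 / (a*b*c) = s * (l 1 * l 2 / (a*b*c)) from by ring]
  have h1 : HasDerivAt (fun s : ℝ => s * (l 1 * l 2 / (a*b*c))) (1 * (l 1 * l 2 / (a*b*c))) (l 0) :=
    (hasDerivAt_id (l 0)).mul_const _
  have h2 := h1.sqrt (show l 0 * (l 1 * l 2 / (a*b*c)) ≠ 0 from ne_of_gt (by positivity))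
  have h3 := h2.const_add 1
  have h4 := h3.sqrt (show (1:ℝ) + Real.sqrt (l 0 * (l 1 * l 2 / (a*b*c))) ≠ 0 from
    ne_of_gt (by positivity))
  have hPd0 : HasDerivAt P
      (((1*(l 0 - a) + l 0*1)*(l 0 - b) + l 0*(l 0 - a)*1)*(l 0 - c) + l 0*(l 0 - a)*(l 0 - b)*1)
      (l 0) := by
    have hPoly : P = fun s => s*(s-a)*(s-b)*(s-c) := funext hP
    rw [hPoly]
    exact (((hasDerivAt_id (l 0)).mul ((hasDerivAt_id (l 0)).sub_const a)).mul
      ((hasDerivAt_id (l 0)).sub_const b)).mul ((hasDerivAt_id (l 0)).sub_const c)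
  have c1 := hPd0.sqrt (ne_of_gt hPx)
  have c2 := c1.const_mul (l 1 - l 2)
  have c3 := c2.div_const (Real.sqrt (-P (l 1)) * Real.sqrt (P (l 2)))
  have c4 := c3.fun_div h3 (show (1:ℝ) + Real.sqrt (l 0 * (l 1 * l 2 / (a*b*c))) ≠ 0 from
    ne_of_gt (by positivity))
  have hnum := (hasDerivAt_const (l 0) (1 * (l 1 * l 2 / (a*b*c)))).fun_div (h2.const_mul 2)
    (show (2:ℝ) * Real.sqrt (l 0 * (l 1 * l 2 / (a*b*c))) ≠ 0 from ne_of_gt (by positivity))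
  have hfrac := hnum.fun_div (h4.const_mul 2)
    (show (2:ℝ) * Real.sqrt (1 + Real.sqrt (l 0 * (l 1 * l 2 / (a*b*c)))) ≠ 0 from
      ne_of_gt (by positivity))
  have b1 := hfrac.fun_mul ((hphi 0 (l 0) (hJmem 0 l hl)).mul_const (φ 1 (l 1) * φ 2 (l 2)))
  have b3 := h4.fun_mul ((hdphi 0 (l 0) (hJmem 0 l hl)).mul_const (φ 1 (l 1) * φ 2 (l 2)))
  have HA0 := c4.fun_mul (b1.fun_add b3)
  have hpd0 : pd 0 (fun w => h w / H2 0 w * pd 0 ψ w) l =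
      (l 1 - l 2)*(φ 1 (l 1))*(φ 2 (l 2))/(Real.sqrt (-P (l 1))*Real.sqrt (P (l 2))) *
      ((1/Real.sqrt (1 + Real.sqrt (l 0 * l 1 * l 2 / (a*b*c)))) *
        ((((l 0-a)*(l 0-b)*(l 0-c)+l 0*(l 0-b)*(l 0-c)+l 0*(l 0-a)*(l 0-c)+l 0*(l 0-a)*(l 0-b))/(2*Real.sqrt (P (l 0)))
            - Real.sqrt (P (l 0))*Real.sqrt (l 0 * l 1 * l 2 / (a*b*c))/(4*(l 0)*(1 + Real.sqrt (l 0 * l 1 * l 2 / (a*b*c)))))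
          *(deriv (φ 0) (l 0) + Real.sqrt (l 0 * l 1 * l 2 / (a*b*c))*(φ 0 (l 0))/(4*(l 0)*(1 + Real.sqrt (l 0 * l 1 * l 2 / (a*b*c)))))
        + Real.sqrt (P (l 0))*(deriv (deriv (φ 0)) (l 0)
            - Real.sqrt (l 0 * l 1 * l 2 / (a*b*c))*((1 + Real.sqrt (l 0 * l 1 * l 2 / (a*b*c)))+Real.sqrt (l 0 * l 1 * l 2 / (a*b*c)))*(φ 0 (l 0))/(8*(l 0)^2*(1 + Real.sqrt (l 0 * l 1 * l 2 / (a*b*c)))^2)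
            + Real.sqrt (l 0 * l 1 * l 2 / (a*b*c))*(deriv (φ 0) (l 0))/(4*(l 0)*(1 + Real.sqrt (l 0 * l 1 * l 2 / (a*b*c))))))) := by
    rw [pd_eq]
    refine (ev0.deriv_eq.trans HA0.deriv).trans ?_
    beta_reduce
    try simp only [id_eq]
    rw [show l 0 * (l 1 * l 2 / (a*b*c)) = l 0 * l 1 * l 2 / (a*b*c) from by ring]
    set SW := Real.sqrt (1 + Real.sqrt (l 0 * l 1 * l 2 / (a*b*c))) with hSWdef
    rw [show (1:ℝ) + Real.sqrt (l 0 * l 1 * l 2 / (a*b*c)) = SW^2 from by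
      rw [hSWdef]; exact (Real.sq_sqrt hWl.le).symm]
    rw [show l 1 * l 2 / (a*b*c) = (Real.sqrt (l 0 * l 1 * l 2 / (a*b*c)))^2 / (l 0) from by
      rw [Real.sq_sqrt hprod.le]; field_simp]
    have hSW0 : SW ≠ 0 := ne_of_gt (hSWdef ▸ hsWpos)
    have hr0 : Real.sqrt (l 0 * l 1 * l 2 / (a*b*c)) ≠ 0 := ne_of_gt hrpos
    have hf0' : Real.sqrt (P (l 0)) ≠ 0 := ne_of_gt hf0pos
    have hf1' : Real.sqrt (-P (l 1)) ≠ 0 := ne_of_gt hf1pos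
    have hf2' : Real.sqrt (P (l 2)) ≠ 0 := ne_of_gt hf2pos
    have hli' : l 0 ≠ 0 := ne_of_gt hl0
    field_simp
    ring
  -- ==== i = 1 ====
  have hUs1 : ∀ᶠ s in nhds (l 1), Function.update l 1 s ∈ U := by
    have hcont : Continuous (fun s : ℝ => Function.update l 1 s) :=
      continuous_const.update 1 continuous_id
    have heq1 : Function.update l 1 (l 1) = l := Function.update_eq_self 1 l
    exact hcont.continuousAt.preimage_mem_nhds (heq1.symm ▸ (hUo.mem_nhds hl))
  have ev1 : (fun s => h (Function.update l 1 s) / H2 1 (Function.update l 1 s)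
        * pd 1 ψ (Function.update l 1 s)) =ᶠ[nhds (l 1)]
      (fun s => (l 0 - l 2) * Real.sqrt (-P s) / (Real.sqrt (P (l 0)) * Real.sqrt (P (l 2)))
          / (1 + Real.sqrt (s * (l 0 * l 2 / (a*b*c)))) *
        (1 * (l 0 * l 2 / (a*b*c)) / (2 * Real.sqrt (s * (l 0 * l 2 / (a*b*c)))) /
            (2 * Real.sqrt (1 + Real.sqrt (s * (l 0 * l 2 / (a*b*c))))) * (φ 1 s * (φ 0 (l 0) * φ 2 (l 2)))
          + Real.sqrt (1 + Real.sqrt (s * (l 0 * l 2 / (a*b*c)))) * (deriv (φ 1) s * (φ 0 (l 0) * φ 2 (l 2))))) := by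
    filter_upwards [hUs1] with s hs
    rw [hC1 _ hs, hB1 _ hs, hW]
    simp only [Function.update_self, Function.update_of_ne (show (0:Fin 3) ≠ 1 by decide),
      Function.update_of_ne (show (2:Fin 3) ≠ 1 by decide)]
    rw [show l 0 * s * l 2 / (a*b*c) = s * (l 0 * l 2 / (a*b*c)) from by ring]
  have h1 : HasDerivAt (fun s : ℝ => s * (l 0 * l 2 / (a*b*c))) (1 * (l 0 * l 2 / (a*b*c))) (l 1) :=
    (hasDerivAt_id (l 1)).mul_const _
  have h2 := h1.sqrt (show l 1 * (l 0 * l 2 / (a*b*c)) ≠ 0 from ne_of_gt (by positivity))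
  have h3 := h2.const_add 1
  have h4 := h3.sqrt (show (1:ℝ) + Real.sqrt (l 1 * (l 0 * l 2 / (a*b*c))) ≠ 0 from
    ne_of_gt (by positivity))
  have hPd1 : HasDerivAt P
      (((1*(l 1 - a) + l 1*1)*(l 1 - b) + l 1*(l 1 - a)*1)*(l 1 - c) + l 1*(l 1 - a)*(l 1 - b)*1)
      (l 1) := by
    have hPoly : P = fun s => s*(s-a)*(s-b)*(s-c) := funext hP
    rw [hPoly]
    exact (((hasDerivAt_id (l 1)).mul ((hasDerivAt_id (l 1)).sub_const a)).mul
      ((hasDerivAt_id (l 1)).sub_const b)).mul ((hasDerivAt_id (l 1)).sub_const c)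
  have c1 := (hPd1.fun_neg).sqrt (show -P (l 1) ≠ 0 from ne_of_gt (by linarith))
  have c2 := c1.const_mul (l 0 - l 2)
  have c3 := c2.div_const (Real.sqrt (P (l 0)) * Real.sqrt (P (l 2)))
  have c4 := c3.fun_div h3 (show (1:ℝ) + Real.sqrt (l 1 * (l 0 * l 2 / (a*b*c))) ≠ 0 from
    ne_of_gt (by positivity))
  have hnum := (hasDerivAt_const (l 1) (1 * (l 0 * l 2 / (a*b*c)))).fun_div (h2.const_mul 2)
    (show (2:ℝ) * Real.sqrt (l 1 * (l 0 * l 2 / (a*b*c))) ≠ 0 from ne_of_gt (by positivity))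
  have hfrac := hnum.fun_div (h4.const_mul 2)
    (show (2:ℝ) * Real.sqrt (1 + Real.sqrt (l 1 * (l 0 * l 2 / (a*b*c)))) ≠ 0 from
      ne_of_gt (by positivity))
  have b1 := hfrac.fun_mul ((hphi 1 (l 1) (hJmem 1 l hl)).mul_const (φ 0 (l 0) * φ 2 (l 2)))
  have b3 := h4.fun_mul ((hdphi 1 (l 1) (hJmem 1 l hl)).mul_const (φ 0 (l 0) * φ 2 (l 2)))
  have HA1 := c4.fun_mul (b1.fun_add b3)
  have hpd1 : pd 1 (fun w => h w / H2 1 w * pd 1 ψ w) l =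
      (l 0 - l 2)*(φ 0 (l 0))*(φ 2 (l 2))/(Real.sqrt (P (l 0))*Real.sqrt (P (l 2))) *
      ((1/Real.sqrt (1 + Real.sqrt (l 0 * l 1 * l 2 / (a*b*c)))) *
        ((-((l 1-a)*(l 1-b)*(l 1-c)+l 1*(l 1-b)*(l 1-c)+l 1*(l 1-a)*(l 1-c)+l 1*(l 1-a)*(l 1-b))/(2*Real.sqrt (-P (l 1)))
            - Real.sqrt (-P (l 1))*Real.sqrt (l 0 * l 1 * l 2 / (a*b*c))/(4*(l 1)*(1 + Real.sqrt (l 0 * l 1 * l 2 / (a*b*c)))))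
          *(deriv (φ 1) (l 1) + Real.sqrt (l 0 * l 1 * l 2 / (a*b*c))*(φ 1 (l 1))/(4*(l 1)*(1 + Real.sqrt (l 0 * l 1 * l 2 / (a*b*c)))))
        + Real.sqrt (-P (l 1))*(deriv (deriv (φ 1)) (l 1)
            - Real.sqrt (l 0 * l 1 * l 2 / (a*b*c))*((1 + Real.sqrt (l 0 * l 1 * l 2 / (a*b*c)))+Real.sqrt (l 0 * l 1 * l 2 / (a*b*c)))*(φ 1 (l 1))/(8*(l 1)^2*(1 + Real.sqrt (l 0 * l 1 * l 2 / (a*b*c)))^2)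
            + Real.sqrt (l 0 * l 1 * l 2 / (a*b*c))*(deriv (φ 1) (l 1))/(4*(l 1)*(1 + Real.sqrt (l 0 * l 1 * l 2 / (a*b*c))))))) := by
    rw [pd_eq]
    refine (ev1.deriv_eq.trans HA1.deriv).trans ?_
    beta_reduce
    try simp only [id_eq]
    rw [show l 1 * (l 0 * l 2 / (a*b*c)) = l 0 * l 1 * l 2 / (a*b*c) from by ring]
    set SW := Real.sqrt (1 + Real.sqrt (l 0 * l 1 * l 2 / (a*b*c))) with hSWdef
    rw [show (1:ℝ) + Real.sqrt (l 0 * l 1 * l 2 / (a*b*c)) = SW^2 from by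
      rw [hSWdef]; exact (Real.sq_sqrt hWl.le).symm]
    rw [show l 0 * l 2 / (a*b*c) = (Real.sqrt (l 0 * l 1 * l 2 / (a*b*c)))^2 / (l 1) from by
      rw [Real.sq_sqrt hprod.le]; field_simp]
    have hSW0 : SW ≠ 0 := ne_of_gt (hSWdef ▸ hsWpos)
    have hr0 : Real.sqrt (l 0 * l 1 * l 2 / (a*b*c)) ≠ 0 := ne_of_gt hrpos
    have hf0' : Real.sqrt (P (l 0)) ≠ 0 := ne_of_gt hf0pos
    have hf1' : Real.sqrt (-P (l 1)) ≠ 0 := ne_of_gt hf1pos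
    have hf2' : Real.sqrt (P (l 2)) ≠ 0 := ne_of_gt hf2pos
    have hli' : l 1 ≠ 0 := ne_of_gt hl1
    field_simp
    ring
  -- ==== i = 2 ====
  have hUs2 : ∀ᶠ s in nhds (l 2), Function.update l 2 s ∈ U := by
    have hcont : Continuous (fun s : ℝ => Function.update l 2 s) :=
      continuous_const.update 2 continuous_id
    have heq2 : Function.update l 2 (l 2) = l := Function.update_eq_self 2 l
    exact hcont.continuousAt.preimage_mem_nhds (heq2.symm ▸ (hUo.mem_nhds hl))
  have ev2 : (fun s => h (Function.update l 2 s) / H2 2 (Function.update l 2 s)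
        * pd 2 ψ (Function.update l 2 s)) =ᶠ[nhds (l 2)]
      (fun s => (l 0 - l 1) * Real.sqrt (P s) / (Real.sqrt (P (l 0)) * Real.sqrt (-P (l 1)))
          / (1 + Real.sqrt (s * (l 0 * l 1 / (a*b*c)))) *
        (1 * (l 0 * l 1 / (a*b*c)) / (2 * Real.sqrt (s * (l 0 * l 1 / (a*b*c)))) /
            (2 * Real.sqrt (1 + Real.sqrt (s * (l 0 * l 1 / (a*b*c))))) * (φ 2 s * (φ 0 (l 0) * φ 1 (l 1)))
          + Real.sqrt (1 + Real.sqrt (s * (l 0 * l 1 / (a*b*c)))) * (deriv (φ 2) s * (φ 0 (l 0) * φ 1 (l 1))))) := by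
    filter_upwards [hUs2] with s hs
    rw [hC2 _ hs, hB2 _ hs, hW]
    simp only [Function.update_self, Function.update_of_ne (show (0:Fin 3) ≠ 2 by decide),
      Function.update_of_ne (show (1:Fin 3) ≠ 2 by decide)]
    rw [show l 0 * l 1 * s / (a*b*c) = s * (l 0 * l 1 / (a*b*c)) from by ring]
  have h1 : HasDerivAt (fun s : ℝ => s * (l 0 * l 1 / (a*b*c))) (1 * (l 0 * l 1 / (a*b*c))) (l 2) :=
    (hasDerivAt_id (l 2)).mul_const _
  have h2 := h1.sqrt (show l 2 * (l 0 * l 1 / (a*b*c)) ≠ 0 from ne_of_gt (by positivity))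
  have h3 := h2.const_add 1
  have h4 := h3.sqrt (show (1:ℝ) + Real.sqrt (l 2 * (l 0 * l 1 / (a*b*c))) ≠ 0 from
    ne_of_gt (by positivity))
  have hPd2 : HasDerivAt P
      (((1*(l 2 - a) + l 2*1)*(l 2 - b) + l 2*(l 2 - a)*1)*(l 2 - c) + l 2*(l 2 - a)*(l 2 - b)*1)
      (l 2) := by
    have hPoly : P = fun s => s*(s-a)*(s-b)*(s-c) := funext hP
    rw [hPoly]
    exact (((hasDerivAt_id (l 2)).mul ((hasDerivAt_id (l 2)).sub_const a)).mul
      ((hasDerivAt_id (l 2)).sub_const b)).mul ((hasDerivAt_id (l 2)).sub_const c)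
  have c1 := hPd2.sqrt (ne_of_gt hPz)
  have c2 := c1.const_mul (l 0 - l 1)
  have c3 := c2.div_const (Real.sqrt (P (l 0)) * Real.sqrt (-P (l 1)))
  have c4 := c3.fun_div h3 (show (1:ℝ) + Real.sqrt (l 2 * (l 0 * l 1 / (a*b*c))) ≠ 0 from
    ne_of_gt (by positivity))
  have hnum := (hasDerivAt_const (l 2) (1 * (l 0 * l 1 / (a*b*c)))).fun_div (h2.const_mul 2)
    (show (2:ℝ) * Real.sqrt (l 2 * (l 0 * l 1 / (a*b*c))) ≠ 0 from ne_of_gt (by positivity))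
  have hfrac := hnum.fun_div (h4.const_mul 2)
    (show (2:ℝ) * Real.sqrt (1 + Real.sqrt (l 2 * (l 0 * l 1 / (a*b*c)))) ≠ 0 from
      ne_of_gt (by positivity))
  have b1 := hfrac.fun_mul ((hphi 2 (l 2) (hJmem 2 l hl)).mul_const (φ 0 (l 0) * φ 1 (l 1)))
  have b3 := h4.fun_mul ((hdphi 2 (l 2) (hJmem 2 l hl)).mul_const (φ 0 (l 0) * φ 1 (l 1)))
  have HA2 := c4.fun_mul (b1.fun_add b3)
  have hpd2 : pd 2 (fun w => h w / H2 2 w * pd 2 ψ w) l =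
      (l 0 - l 1)*(φ 0 (l 0))*(φ 1 (l 1))/(Real.sqrt (P (l 0))*Real.sqrt (-P (l 1))) *
      ((1/Real.sqrt (1 + Real.sqrt (l 0 * l 1 * l 2 / (a*b*c)))) *
        ((((l 2-a)*(l 2-b)*(l 2-c)+l 2*(l 2-b)*(l 2-c)+l 2*(l 2-a)*(l 2-c)+l 2*(l 2-a)*(l 2-b))/(2*Real.sqrt (P (l 2)))
            - Real.sqrt (P (l 2))*Real.sqrt (l 0 * l 1 * l 2 / (a*b*c))/(4*(l 2)*(1 + Real.sqrt (l 0 * l 1 * l 2 / (a*b*c)))))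
          *(deriv (φ 2) (l 2) + Real.sqrt (l 0 * l 1 * l 2 / (a*b*c))*(φ 2 (l 2))/(4*(l 2)*(1 + Real.sqrt (l 0 * l 1 * l 2 / (a*b*c)))))
        + Real.sqrt (P (l 2))*(deriv (deriv (φ 2)) (l 2)
            - Real.sqrt (l 0 * l 1 * l 2 / (a*b*c))*((1 + Real.sqrt (l 0 * l 1 * l 2 / (a*b*c)))+Real.sqrt (l 0 * l 1 * l 2 / (a*b*c)))*(φ 2 (l 2))/(8*(l 2)^2*(1 + Real.sqrt (l 0 * l 1 * l 2 / (a*b*c)))^2)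
            + Real.sqrt (l 0 * l 1 * l 2 / (a*b*c))*(deriv (φ 2) (l 2))/(4*(l 2)*(1 + Real.sqrt (l 0 * l 1 * l 2 / (a*b*c))))))) := by
    rw [pd_eq]
    refine (ev2.deriv_eq.trans HA2.deriv).trans ?_
    beta_reduce
    try simp only [id_eq]
    rw [show l 2 * (l 0 * l 1 / (a*b*c)) = l 0 * l 1 * l 2 / (a*b*c) from by ring]
    set SW := Real.sqrt (1 + Real.sqrt (l 0 * l 1 * l 2 / (a*b*c))) with hSWdef
    rw [show (1:ℝ) + Real.sqrt (l 0 * l 1 * l 2 / (a*b*c)) = SW^2 from by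
      rw [hSWdef]; exact (Real.sq_sqrt hWl.le).symm]
    rw [show l 0 * l 1 / (a*b*c) = (Real.sqrt (l 0 * l 1 * l 2 / (a*b*c)))^2 / (l 2) from by
      rw [Real.sq_sqrt hprod.le]; field_simp]
    have hSW0 : SW ≠ 0 := ne_of_gt (hSWdef ▸ hsWpos)
    have hr0 : Real.sqrt (l 0 * l 1 * l 2 / (a*b*c)) ≠ 0 := ne_of_gt hrpos
    have hf0' : Real.sqrt (P (l 0)) ≠ 0 := ne_of_gt hf0pos
    have hf1' : Real.sqrt (-P (l 1)) ≠ 0 := ne_of_gt hf1pos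
    have hf2' : Real.sqrt (P (l 2)) ≠ 0 := ne_of_gt hf2pos
    have hli' : l 2 ≠ 0 := ne_of_gt hl2
    field_simp
    ring
  -- ==== assembly ====
  have hode0' := hode 0 (l 0) (hJmem 0 l hl)
  rw [show deriv P (l 0) = (l 0-a)*(l 0-b)*(l 0-c)+l 0*(l 0-b)*(l 0-c)+l 0*(l 0-a)*(l 0-c)+l 0*(l 0-a)*(l 0-b) from by
      rw [hPd0.deriv]; ring,
    show P (l 0) = Real.sqrt (P (l 0))^2 from (Real.sq_sqrt hPx.le).symm] at hode0'
  have hode1' := hode 1 (l 1) (hJmem 1 l hl)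
  rw [show deriv P (l 1) = (l 1-a)*(l 1-b)*(l 1-c)+l 1*(l 1-b)*(l 1-c)+l 1*(l 1-a)*(l 1-c)+l 1*(l 1-a)*(l 1-b) from by
      rw [hPd1.deriv]; ring,
    show P (l 1) = -(Real.sqrt (-P (l 1))^2) from by
      rw [Real.sq_sqrt (show (0:ℝ) ≤ -P (l 1) by linarith)]; ring] at hode1'
  have hode2' := hode 2 (l 2) (hJmem 2 l hl)
  rw [show deriv P (l 2) = (l 2-a)*(l 2-b)*(l 2-c)+l 2*(l 2-b)*(l 2-c)+l 2*(l 2-a)*(l 2-c)+l 2*(l 2-a)*(l 2-b) from by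
      rw [hPd2.deriv]; ring,
    show P (l 2) = Real.sqrt (P (l 2))^2 from (Real.sq_sqrt hPz.le).symm] at hode2'
  have hrrel : (Real.sqrt (l 0 * l 1 * l 2 / (a*b*c)))^2*(a*b*c) = l 0 * l 1 * l 2 := by
    rw [Real.sq_sqrt hprod.le]; field_simp
  have hp0rel : Real.sqrt (P (l 0))^2 = l 0*(l 0-a)*(l 0-b)*(l 0-c) := by
    rw [Real.sq_sqrt hPx.le, hP]
  have hp1rel : -(Real.sqrt (-P (l 1))^2) = l 1*(l 1-a)*(l 1-b)*(l 1-c) := by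
    rw [Real.sq_sqrt (show (0:ℝ) ≤ -P (l 1) by linarith), neg_neg, hP]
  have hp2rel : Real.sqrt (P (l 2))^2 = l 2*(l 2-a)*(l 2-b)*(l 2-c) := by
    rw [Real.sq_sqrt hPz.le, hP]
  have heq := bocherPoly (l 0) (l 1) (l 2) a b c α1 α2 (Real.sqrt (l 0 * l 1 * l 2 / (a*b*c))) (1 + Real.sqrt (l 0 * l 1 * l 2 / (a*b*c)))
    (Real.sqrt (P (l 0))^2) (-(Real.sqrt (-P (l 1))^2)) (Real.sqrt (P (l 2))^2)
    ((l 0-a)*(l 0-b)*(l 0-c)+l 0*(l 0-b)*(l 0-c)+l 0*(l 0-a)*(l 0-c)+l 0*(l 0-a)*(l 0-b))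
    ((l 1-a)*(l 1-b)*(l 1-c)+l 1*(l 1-b)*(l 1-c)+l 1*(l 1-a)*(l 1-c)+l 1*(l 1-a)*(l 1-b))
    ((l 2-a)*(l 2-b)*(l 2-c)+l 2*(l 2-b)*(l 2-c)+l 2*(l 2-a)*(l 2-c)+l 2*(l 2-a)*(l 2-b))
    rfl hrrel hp0rel hp1rel hp2rel rfl rfl rfl
  rw [Fin.sum_univ_three, hpd0, hpd1, hpd2]
  exact final_identity (l 0) (l 1) (l 2) α1 α2 (Real.sqrt (l 0 * l 1 * l 2 / (a*b*c))) (1 + Real.sqrt (l 0 * l 1 * l 2 / (a*b*c))) (Real.sqrt (1 + Real.sqrt (l 0 * l 1 * l 2 / (a*b*c))))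
    (Real.sqrt (P (l 0))) (Real.sqrt (-P (l 1))) (Real.sqrt (P (l 2)))
    ((l 0-a)*(l 0-b)*(l 0-c)+l 0*(l 0-b)*(l 0-c)+l 0*(l 0-a)*(l 0-c)+l 0*(l 0-a)*(l 0-b))
    ((l 1-a)*(l 1-b)*(l 1-c)+l 1*(l 1-b)*(l 1-c)+l 1*(l 1-a)*(l 1-c)+l 1*(l 1-a)*(l 1-b))
    ((l 2-a)*(l 2-b)*(l 2-c)+l 2*(l 2-b)*(l 2-c)+l 2*(l 2-a)*(l 2-c)+l 2*(l 2-a)*(l 2-b))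
    (φ 0 (l 0)) (φ 1 (l 1)) (φ 2 (l 2))
    (deriv (φ 0) (l 0)) (deriv (φ 1) (l 1)) (deriv (φ 2) (l 2))
    (deriv (deriv (φ 0)) (l 0)) (deriv (deriv (φ 1)) (l 1)) (deriv (deriv (φ 2)) (l 2))
    (ne_of_gt hl0) (ne_of_gt hl1) (ne_of_gt hl2) (ne_of_gt hWl) (ne_of_gt hsWpos)
    (ne_of_gt hf0pos) (ne_of_gt hf1pos) (ne_of_gt hf2pos)
    hode0' hode1' hode2' heq
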